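/- Let V be a unital integral quantale and Y a V-category (a set with Y(−,−) : Y × Y → V satisfying ⊤ ≤ Y(x,x) and Y(x,y) ⊗ Y(y,z) ≤ Y(x,z)). Then the following are equivalent: (ii) for all x, y, z ∈ Y, Y(z,x) ∧ Y(z,y) ≤ Y(x,y); (iii) Y is symmetric (Y(x,y) = Y(y,x) for all x,y) and satisfies Y(x,y) ∧ Y(y,z) ≤ Y(x,z) for all x,y,z. -/
import Mathlib


/-- For a `V`-category `Y` over a unital integral quantale `V`, condition
(ii) `Y(z,x) ∧ Y(z,y) ≤ Y(x,y)` is equivalent to (iii) `Y` being a symmetric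
`V_∧`-category. -/
theorem W_maltsev_Vcat_conditions {V : Type*} [CompleteLattice V] [Monoid V]
    (hone : (1 : V) = ⊤)
    (hdistl : ∀ (a : V) (s : Set V), a * sSup s = ⨆ b ∈ s, a * b)
    (hdistr : ∀ (a : V) (s : Set V), sSup s * a = ⨆ b ∈ s, b * a)
    {Y : Type*} (d : Y → Y → V)
    (hrefl : ∀ x : Y, ⊤ ≤ d x x)
    (htrans : ∀ x y z : Y, d x y * d y z ≤ d x z) :
    (∀ x y z : Y, d z x ⊓ d z y ≤ d x y) ↔
    ((∀ x y : Y, d x y = d y x) ∧ (∀ x y z : Y, d x y ⊓ d y z ≤ d x z)) := by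
  constructor
  · intro h
    have hsym : ∀ x y : Y, d x y = d y x := by
      have key : ∀ x y : Y, d y x ≤ d x y := by
        intro x y
        have : d y x ⊓ d y y ≤ d x y := h x y y
        calc d y x = d y x ⊓ ⊤ := (inf_top_eq _).symm
          _ ≤ d y x ⊓ d y y := inf_le_inf_left _ (hrefl y)
          _ ≤ d x y := this
      exact fun x y => le_antisymm (key y x) (key x y)
    refine ⟨hsym, fun x y z => ?_⟩
    calc d x y ⊓ d y z = d y x ⊓ d y z := by rw [hsym x y]
      _ ≤ d x z := h x z y
  · rintro ⟨hsym, ht⟩ x y z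
    calc d z x ⊓ d z y = d x z ⊓ d z y := by rw [hsym z x]
      _ ≤ d x y := ht x z y
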